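/- arXiv:2307.11523 — 3 statements merged into one kernel-verified Lean document; each statement's English description precedes it below -/
import Mathlib

section
/- Let f(θ) = |z_0 + z e^{jθ}|² with z_0, z ∈ ℂ, and let y_1 = f(0), y_2 = f(π/2), y_3 = f(π). Then y_1 − y_3 = 4 Re(z_0 z̄) and 2y_2 − y_1 − y_3 = 4 Im(z_0 z̄); consequently, if z_0 z̄ ≠ 0, θ⋆ = arg((y_1 − y_3) + j(2y_2 − y_1 − y_3)) maximizes f over ℝ. -/
open Complex

lemma key_expand (z₀ z : ℂ) (θ : ℝ) :
    ‖z₀ + z * Complex.exp ((θ : ℂ) * Complex.I)‖ ^ 2 =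
      Complex.normSq z₀ + Complex.normSq z +
        2 * ((z₀ * (starRingEnd ℂ) z).re * Real.cos θ +
             (z₀ * (starRingEnd ℂ) z).im * Real.sin θ) := by
  rw [Complex.sq_norm]
  have h := Real.sin_sq_add_cos_sq θ
  simp [Complex.normSq_apply, Complex.add_re, Complex.add_im, Complex.mul_re, Complex.mul_im,
    Complex.exp_ofReal_mul_I_re, Complex.exp_ofReal_mul_I_im]
  nlinarith [h]

theorem stmt_6 (z₀ z : ℂ) (y₁ y₂ y₃ : ℝ)
    (h₁ : y₁ = ‖z₀ + z * Complex.exp ((0 : ℂ) * Complex.I)‖ ^ 2)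
    (h₂ : y₂ = ‖z₀ + z * Complex.exp (((Real.pi / 2 : ℝ) : ℂ) * Complex.I)‖ ^ 2)
    (h₃ : y₃ = ‖z₀ + z * Complex.exp (((Real.pi : ℝ) : ℂ) * Complex.I)‖ ^ 2) :
    y₁ - y₃ = 4 * (z₀ * (starRingEnd ℂ) z).re ∧
    2 * y₂ - y₁ - y₃ = 4 * (z₀ * (starRingEnd ℂ) z).im ∧
    (z₀ * (starRingEnd ℂ) z ≠ 0 →
      ∀ θ : ℝ, ‖z₀ + z * Complex.exp ((θ : ℂ) * Complex.I)‖ ^ 2 ≤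
        ‖z₀ + z * Complex.exp
          ((Complex.arg (((y₁ - y₃ : ℝ) : ℂ) + ((2 * y₂ - y₁ - y₃ : ℝ) : ℂ) * Complex.I) : ℂ)
            * Complex.I)‖ ^ 2) := by
  set w := z₀ * (starRingEnd ℂ) z with hw
  have e0 : ((0 : ℂ) * Complex.I) = (((0:ℝ):ℂ) * Complex.I) := by norm_num
  rw [e0] at h₁
  rw [key_expand] at h₁ h₂ h₃
  simp [Real.cos_pi, Real.sin_pi, Real.cos_pi_div_two, Real.sin_pi_div_two] at h₁ h₂ h₃
  have hre : y₁ - y₃ = 4 * w.re := by rw [h₁, h₃]; simp [hw, Complex.mul_re]; ring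
  have him : 2 * y₂ - y₁ - y₃ = 4 * w.im := by rw [h₁, h₂, h₃]; simp [hw, Complex.mul_im]; ring
  refine ⟨hre, him, fun hne θ => ?_⟩
  have harg : Complex.arg (((y₁ - y₃ : ℝ) : ℂ) + ((2 * y₂ - y₁ - y₃ : ℝ) : ℂ) * Complex.I)
      = Complex.arg w := by
    rw [hre, him]
    have : (((4 * w.re : ℝ) : ℂ) + ((4 * w.im : ℝ) : ℂ) * Complex.I) = (4:ℝ) * w := by
      apply Complex.ext <;> simp
    rw [this, Complex.arg_real_mul _ (by norm_num : (0:ℝ) < 4)]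
  rw [harg, key_expand, key_expand]
  have hcos := Complex.cos_arg hne
  have hsin := Complex.sin_arg w
  have habs : 0 < ‖w‖ := norm_pos_iff.mpr hne
  have hsq : w.re ^ 2 + w.im ^ 2 = ‖w‖ ^ 2 := by
    rw [Complex.sq_norm, Complex.normSq_apply]; ring
  have hb : w.re * Real.cos θ + w.im * Real.sin θ ≤ ‖w‖ := by
    nlinarith [sq_nonneg (w.re * Real.sin θ - w.im * Real.cos θ), Real.sin_sq_add_cos_sq θ,
      habs.le]
  have hrhs : w.re * Real.cos (Complex.arg w) + w.im * Real.sin (Complex.arg w)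
      = ‖w‖ := by
    rw [hcos, hsin]
    field_simp
    nlinarith [hsq]
  linarith [hb, hrhs.ge]
end

section
/- Let z_1,...,z_N be nonzero complex numbers and for each n define u_n = ∑_{i≠n} z_i. If for every n, u_n ≠ 0 and Arg(z_n) = Arg(u_n), then Arg(z_1) = Arg(z_2) = ... = Arg(z_N). -/
open Complex

theorem stmt_9 (N : ℕ) (z : Fin N → ℂ) (hz : ∀ n, z n ≠ 0)
    (u : Fin N → ℂ) (hu : ∀ n, u n = ∑ i ∈ Finset.univ.erase n, z i)
    (h : ∀ n, u n ≠ 0 ∧ (z n).arg = (u n).arg) :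
    ∀ m n, (z m).arg = (z n).arg := by
  have key : ∀ n, (z n).arg = (∑ i, z i).arg := by
    intro n
    have hS : (∑ i, z i) = z n + u n := by
      rw [hu n, Finset.add_sum_erase _ _ (Finset.mem_univ n)]
    obtain ⟨hun, harg⟩ := h n
    rw [arg_eq_arg_iff (hz n) hun] at harg
    set c : ℝ := ‖u n‖ / ‖z n‖ with hc
    have hcpos : 0 < c := div_pos (norm_pos_iff.mpr hun) (norm_pos_iff.mpr (hz n))
    have : (∑ i, z i) = ((1 + c : ℝ) : ℂ) * z n := by
      rw [hS, ← harg, hc]; push_cast; ring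
    rw [this, arg_real_mul _ (by linarith)]
  intro m n
  rw [key m, key n]
end

section
/- Let z_1,...,z_N be nonzero complex numbers and θ⋆ ∈ ℝ^N a phase vector such that for every n, with w_n = ∑_{i≠n} z_i e^{jθ⋆_i} ≠ 0, one has Arg(z_n e^{jθ⋆_n}) = Arg(w_n). Then f(θ⋆) = (∑_{n=1}^N |z_n|)², i.e., θ⋆ is a global maximizer of f(θ) = |∑_n z_n e^{jθ_n}|². -/
open Complex

theorem stmt_11 (N : ℕ) (z : Fin N → ℂ) (hz : ∀ n, z n ≠ 0) (θstar : Fin N → ℝ)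
    (w : Fin N → ℂ)
    (hw : ∀ n, w n = ∑ i ∈ Finset.univ.erase n, z i * Complex.exp ((θstar i : ℂ) * Complex.I))
    (h : ∀ n, w n ≠ 0 ∧
      (z n * Complex.exp ((θstar n : ℂ) * Complex.I)).arg = (w n).arg) :
    ‖∑ n, z n * Complex.exp ((θstar n : ℂ) * Complex.I)‖ ^ 2 =
        (∑ n, ‖z n‖) ^ 2 ∧
      ∀ θ : Fin N → ℝ,
        ‖∑ n, z n * Complex.exp ((θ n : ℂ) * Complex.I)‖ ^ 2 ≤
          ‖∑ n, z n * Complex.exp ((θstar n : ℂ) * Complex.I)‖ ^ 2 := by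
  set v : Fin N → ℂ := fun n => z n * Complex.exp ((θstar n : ℂ) * Complex.I) with hv
  have hvne : ∀ n, v n ≠ 0 := fun n => mul_ne_zero (hz n) (Complex.exp_ne_zero _)
  have habsv : ∀ n, ‖v n‖ = ‖z n‖ := by
    intro n
    simp [hv, Complex.norm_exp]
  set S : ℂ := ∑ n, v n with hS
  have hsplit : ∀ n, S = v n + w n := by
    intro n
    rw [hS, hw n, ← Finset.add_sum_erase _ _ (Finset.mem_univ n)]
  have hargS : ∀ n, S.arg = (v n).arg := by
    intro n
    obtain ⟨hwne, harg⟩ := h n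
    have hwv := (Complex.arg_eq_arg_iff (hvne n) hwne).mp harg
    have hr : (0:ℝ) < 1 + ‖w n‖ / ‖v n‖ := by positivity
    have hkey : S = (1 + (‖w n‖ : ℂ) / (‖v n‖ : ℂ)) * v n := by
      rw [hsplit n]
      linear_combination -hwv
    have hc : (((1 + ‖w n‖ / ‖v n‖ : ℝ)) : ℂ) =
        1 + (‖w n‖ : ℂ) / (‖v n‖ : ℂ) := by push_cast; ring
    rw [hkey, ← hc, Complex.arg_real_mul _ hr]
  have hv_eq : ∀ n, v n = (‖z n‖ : ℂ) * Complex.exp (S.arg * Complex.I) := by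
    intro n
    conv_lhs => rw [← Complex.norm_mul_exp_arg_mul_I (v n)]
    rw [hargS n, habsv n]
  have hSsum : S = ((∑ n, ‖z n‖ : ℝ) : ℂ) * Complex.exp (S.arg * Complex.I) := by
    conv_lhs => rw [hS]
    push_cast
    rw [Finset.sum_mul]
    exact Finset.sum_congr rfl fun n _ => hv_eq n
  have habsS : ‖S‖ = ∑ n, ‖z n‖ := by
    have hnn : (0:ℝ) ≤ ∑ n, ‖z n‖ :=
      Finset.sum_nonneg fun n _ => norm_nonneg _
    rw [hSsum, norm_mul, Complex.norm_exp, Complex.norm_of_nonneg hnn]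
    simp
  constructor
  · rw [← hS] at *
    rw [habsS]
  · intro θ
    have h1 : ‖∑ n, z n * Complex.exp ((θ n : ℂ) * Complex.I)‖ ≤
        ∑ n, ‖z n‖ := by
      refine le_trans (norm_sum_le _ _) ?_
      apply le_of_eq
      refine Finset.sum_congr rfl fun n _ => ?_
      simp [Complex.norm_exp]
    calc ‖∑ n, z n * Complex.exp ((θ n : ℂ) * Complex.I)‖ ^ 2
        ≤ (∑ n, ‖z n‖) ^ 2 :=
          pow_le_pow_left₀ (norm_nonneg _) h1 2
      _ = ‖S‖ ^ 2 := by rw [habsS]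
end
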